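/- All cluster monomials of the coefficient-free cluster algebra of type A_2 are log-concave; explicitly, for all natural numbers m1, m2, each of the five families x1^{m1}x2^{m2}, ((x2+1)/x1)^{m1}·x2^{m2}, ((x2+1)/x1)^{m1}·((x1+x2+1)/(x1x2))^{m2}, ((x1+1)/x2)^{m1}·((x1+x2+1)/(x1x2))^{m2}, and ((x1+1)/x2)^{m1}·x1^{m2} is a log-concave Laurent polynomial in x1, x2. -/

import Mathlib

/-- The Laurent monomial with exponent vector `d` and coefficient `1`,
as an element of the ring of multivariate Laurent polynomials
(the add-monoid algebra of `ℤ` over the group of exponent vectors). -/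
noncomputable def Lmon (m : ℕ) (d : Fin m →₀ ℤ) : AddMonoidAlgebra ℤ (Fin m →₀ ℤ) :=
  AddMonoidAlgebra.single d 1

/-- The Laurent monomial `xᵢ^e`. -/
noncomputable def LX (m : ℕ) (i : Fin m) (e : ℤ) : AddMonoidAlgebra ℤ (Fin m →₀ ℤ) :=
  Lmon m (Finsupp.single i e)

/-- A multivariate Laurent polynomial is log-concave if its coefficients are
nonnegative and, in each variable separately, the square of every coefficient is
at least the product of its two neighboring coefficients. -/
def IsLogConcave {m : ℕ} (f : AddMonoidAlgebra ℤ (Fin m →₀ ℤ)) : Prop :=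
  (∀ d, 0 ≤ f.coeff d) ∧
  ∀ (j : Fin m) (d : Fin m →₀ ℤ),
    f.coeff (d - Finsupp.single j 1) * f.coeff (d + Finsupp.single j 1) ≤ (f.coeff d) ^ 2


/-- Extended binomial coefficient on ℤ. -/
def C2 (n k : ℤ) : ℤ := if 0 ≤ n ∧ 0 ≤ k then (n.toNat.choose k.toNat : ℤ) else 0

lemma C2_nonneg (n k : ℤ) : 0 ≤ C2 n k := by
  unfold C2; split_ifs <;> positivity

lemma natRow (n k : ℕ) : n.choose k * n.choose (k + 2) ≤ n.choose (k + 1) ^ 2 := by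
  rcases le_or_gt (k + 1) n with h | h
  · have h1 := Nat.choose_succ_right_eq n k
    have h2 := Nat.choose_succ_right_eq n (k + 1)
    have hpos : 0 < (n - k) * (k + 2) := by
      have : 0 < n - k := by omega
      positivity
    refine Nat.le_of_mul_le_mul_right ?_ hpos
    have e1 : n.choose k * n.choose (k + 2) * ((n - k) * (k + 2))
        = (n.choose k * (n - k)) * (n.choose (k + 2) * (k + 2)) := by ring
    have e2 : n.choose (k+1) * (k+1) * (n.choose (k+1) * (n - (k+1)))
        = n.choose (k+1) ^2 * ((k+1) * (n - (k+1))) := by ring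
    rw [e1, ← h1, h2, e2]
    have : (k + 1) * (n - (k + 1)) ≤ (n - k) * (k + 2) := by
      have hnk : n - (k+1) + 1 = n - k := by omega
      calc (k + 1) * (n - (k + 1)) ≤ (k + 2) * (n - (k+1) + 1) :=
            Nat.mul_le_mul (by omega) (by omega)
        _ = (n - k) * (k + 2) := by rw [hnk]; ring
    exact Nat.mul_le_mul_left _ this
  · have : n.choose (k + 2) = 0 := Nat.choose_eq_zero_of_lt (by omega)
    simp [this]

lemma natCol (n k : ℕ) : n.choose k * (n + 2).choose k ≤ (n + 1).choose k ^ 2 := by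
  rcases le_or_gt k n with h | h
  · have h1 := Nat.choose_mul_succ_eq n k
    have h2 := Nat.choose_mul_succ_eq (n + 1) k
    have hpos : 0 < (n + 1) * (n + 2 - k) := by
      have : 0 < n + 2 - k := by omega
      positivity
    refine Nat.le_of_mul_le_mul_right ?_ hpos
    have e1 : n.choose k * (n+2).choose k * ((n + 1) * (n + 2 - k))
        = (n.choose k * (n + 1)) * ((n+2).choose k * (n + 2 - k)) := by ring
    have e2 : (n+1).choose k * (n + 1 - k) * ((n+1).choose k * (n + 2))
        = (n+1).choose k ^ 2 * ((n + 1 - k) * (n + 2)) := by ring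
    rw [e1, h1, ← h2, e2]
    have : (n + 1 - k) * (n + 2) ≤ (n + 1) * (n + 2 - k) := by
      have hk : n + 1 - k = (n - k) + 1 := by omega
      have hk2 : n + 2 - k = (n - k) + 2 := by omega
      rw [hk, hk2]
      set t := n - k with ht
      have hn : n = t + k := by omega
      nlinarith [Nat.zero_le t, Nat.zero_le k]
    exact Nat.mul_le_mul_left _ this
  · have : n.choose k = 0 := Nat.choose_eq_zero_of_lt h
    simp [this]

lemma C2_row (n k : ℤ) : C2 n (k - 1) * C2 n (k + 1) ≤ C2 n k ^ 2 := by
  rcases le_or_gt 0 n with hn | hn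
  · rcases le_or_gt 1 k with hk | hk
    · have h1 : C2 n (k-1) = (n.toNat.choose (k-1).toNat : ℤ) := by unfold C2; rw [if_pos ⟨hn, by omega⟩]
      have h2 : C2 n (k+1) = (n.toNat.choose ((k-1).toNat + 2) : ℤ) := by
        unfold C2; rw [if_pos ⟨hn, by omega⟩]; congr 2; omega
      have h3 : C2 n k = (n.toNat.choose ((k-1).toNat + 1) : ℤ) := by
        unfold C2; rw [if_pos ⟨hn, by omega⟩]; congr 2; omega
      rw [h1, h2, h3]
      exact_mod_cast natRow n.toNat (k-1).toNat
    · have : C2 n (k - 1) = 0 := by unfold C2; rw [if_neg (by omega)]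
      rw [this, zero_mul]; positivity
  · have : C2 n (k - 1) = 0 := by unfold C2; rw [if_neg (by omega)]
    rw [this, zero_mul]; positivity

lemma C2_col (n k : ℤ) : C2 (n - 1) k * C2 (n + 1) k ≤ C2 n k ^ 2 := by
  rcases le_or_gt 1 n with hn | hn
  · rcases le_or_gt 0 k with hk | hk
    · have h1 : C2 (n-1) k = ((n-1).toNat.choose k.toNat : ℤ) := by unfold C2; rw [if_pos ⟨by omega, hk⟩]
      have h2 : C2 (n+1) k = (((n-1).toNat + 2).choose k.toNat : ℤ) := by
        unfold C2; rw [if_pos ⟨by omega, hk⟩]; congr 2; omega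
      have h3 : C2 n k = (((n-1).toNat + 1).choose k.toNat : ℤ) := by
        unfold C2; rw [if_pos ⟨by omega, hk⟩]; congr 2; omega
      rw [h1, h2, h3]
      exact_mod_cast natCol (n-1).toNat k.toNat
    · have : C2 (n - 1) k = 0 := by unfold C2; rw [if_neg (by omega)]
      rw [this, zero_mul]; positivity
  · have : C2 (n - 1) k = 0 := by unfold C2; rw [if_neg (by omega)]
    rw [this, zero_mul]; positivity

lemma C2_pascal (n k : ℤ) (hn : 0 ≤ n) : C2 (n + 1) k = C2 n (k - 1) + C2 n k := by
  unfold C2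
  rcases lt_trichotomy k 0 with hk | hk | hk
  · rw [if_neg (by omega), if_neg (by omega), if_neg (by omega)]; ring
  · subst hk
    rw [if_pos ⟨by omega, le_refl 0⟩, if_neg (by omega), if_pos ⟨hn, le_refl 0⟩]
    simp
  · rw [if_pos ⟨by omega, by omega⟩, if_pos ⟨hn, by omega⟩, if_pos ⟨hn, by omega⟩]
    have e1 : (n + 1).toNat = n.toNat + 1 := by omega
    have e2 : k.toNat = (k - 1).toNat + 1 := by omega
    rw [e1, e2, Nat.choose_succ_succ]
    push_cast; ring

lemma C2_zero (k : ℤ) : C2 0 k = if k = 0 then 1 else 0 := by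
  unfold C2
  split_ifs with h1 h2 h2
  · have : k.toNat = 0 := by omega
    simp [this]
  · have : 0 < k.toNat := by omega
    rw [Nat.choose_eq_zero_of_lt (by simpa using this)]; rfl
  · omega
  · rfl


-- apply helpers
@[simp] lemma sapp01 (z : ℤ) : (Finsupp.single (0:Fin 2) z) 1 = 0 :=
  Finsupp.single_eq_of_ne (by decide)
@[simp] lemma sapp10 (z : ℤ) : (Finsupp.single (1:Fin 2) z) 0 = 0 :=
  Finsupp.single_eq_of_ne (by decide)

lemma fin2_ext {d c : Fin 2 →₀ ℤ} (h0 : d 0 = c 0) (h1 : d 1 = c 1) : d = c := by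
  ext i; fin_cases i <;> assumption

lemma coeff_Lmon (c d : Fin 2 →₀ ℤ) : (Lmon 2 c).coeff d = if d 0 = c 0 ∧ d 1 = c 1 then 1 else 0 := by
  rw [Lmon, AddMonoidAlgebra.coeff_single, Finsupp.single_apply]
  split_ifs with h1 h2 h2
  · rfl
  · exact absurd ⟨h1 ▸ rfl, h1 ▸ rfl⟩ h2
  · exact absurd (fin2_ext h2.1 h2.2).symm h1
  · rfl

lemma coeff_one (d : Fin 2 →₀ ℤ) :
    (1 : AddMonoidAlgebra ℤ (Fin 2 →₀ ℤ)).coeff d = if d 0 = 0 ∧ d 1 = 0 then 1 else 0 := by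
  have : (1 : AddMonoidAlgebra ℤ (Fin 2 →₀ ℤ)) = Lmon 2 0 := rfl
  rw [this, coeff_Lmon]; simp

lemma coeff_mul_Lmon (f : AddMonoidAlgebra ℤ (Fin 2 →₀ ℤ)) (c d : Fin 2 →₀ ℤ) :
    (f * Lmon 2 c).coeff d = f.coeff (d - c) := by
  rw [Lmon, AddMonoidAlgebra.coeff_mul_single_apply, mul_one, sub_eq_add_neg]

lemma coeff_mul_LX (f : AddMonoidAlgebra ℤ (Fin 2 →₀ ℤ)) (i : Fin 2) (e : ℤ) (d : Fin 2 →₀ ℤ) :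
    (f * LX 2 i e).coeff d = f.coeff (d - Finsupp.single i e) := coeff_mul_Lmon f _ d

lemma Lmon_mul (c c' : Fin 2 →₀ ℤ) : Lmon 2 c * Lmon 2 c' = Lmon 2 (c + c') := by
  rw [Lmon, Lmon, Lmon, AddMonoidAlgebra.single_mul_single, mul_one]

lemma LX_pow (i : Fin 2) (e : ℤ) (n : ℕ) : (LX 2 i e) ^ n = Lmon 2 (Finsupp.single i (n * e)) := by
  rw [LX, Lmon, AddMonoidAlgebra.single_pow, one_pow,
    Finsupp.smul_single]
  norm_num [Lmon]
abbrev R2 := AddMonoidAlgebra ℤ (Fin 2 →₀ ℤ)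

lemma coeff_B1 (n : ℕ) (d : Fin 2 →₀ ℤ) :
    ((LX 2 1 1 + 1) ^ n).coeff d = if d 0 = 0 then C2 n (d 1) else 0 := by
  induction n generalizing d with
  | zero =>
    rw [pow_zero, coeff_one]
    have : ((0:ℕ):ℤ) = 0 := rfl
    rw [this, C2_zero]
    split_ifs <;> simp_all
  | succ n ih =>
    rw [pow_succ, mul_add, mul_one, AddMonoidAlgebra.coeff_add, Finsupp.add_apply, coeff_mul_LX, ih, ih]
    have e0 : ((d - Finsupp.single (1:Fin 2) (1:ℤ)) : Fin 2 →₀ ℤ) 0 = d 0 := by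
      rw [Finsupp.sub_apply, sapp10, sub_zero]
    have e1 : ((d - Finsupp.single (1:Fin 2) (1:ℤ)) : Fin 2 →₀ ℤ) 1 = d 1 - 1 := by
      rw [Finsupp.sub_apply, Finsupp.single_eq_same]
    rw [e0, e1]
    push_cast [C2_pascal (n : ℤ) (d 1) (by positivity)]
    split_ifs <;> ring

lemma coeff_A1 (n : ℕ) (d : Fin 2 →₀ ℤ) :
    ((LX 2 0 1 + 1) ^ n).coeff d = if d 1 = 0 then C2 n (d 0) else 0 := by
  induction n generalizing d with
  | zero =>
    rw [pow_zero, coeff_one]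
    have : ((0:ℕ):ℤ) = 0 := rfl
    rw [this, C2_zero]
    split_ifs <;> simp_all
  | succ n ih =>
    rw [pow_succ, mul_add, mul_one, AddMonoidAlgebra.coeff_add, Finsupp.add_apply, coeff_mul_LX, ih, ih]
    have e0 : ((d - Finsupp.single (0:Fin 2) (1:ℤ)) : Fin 2 →₀ ℤ) 1 = d 1 := by
      rw [Finsupp.sub_apply, sapp01, sub_zero]
    have e1 : ((d - Finsupp.single (0:Fin 2) (1:ℤ)) : Fin 2 →₀ ℤ) 0 = d 0 - 1 := by
      rw [Finsupp.sub_apply, Finsupp.single_eq_same]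
    rw [e0, e1]
    push_cast [C2_pascal (n : ℤ) (d 0) (by positivity)]
    split_ifs <;> ring

lemma coeff_core3 (m2 m1 : ℕ) (d : Fin 2 →₀ ℤ) :
    ((LX 2 1 1 + 1) ^ m1 * (LX 2 0 1 + LX 2 1 1 + 1) ^ m2).coeff d
      = C2 m2 (d 0) * C2 (m1 + m2 - d 0) (d 1) := by
  induction m2 generalizing m1 d with
  | zero =>
    rw [pow_zero, mul_one, coeff_B1]
    have : ((0:ℕ):ℤ) = 0 := rfl
    rw [this, C2_zero]
    split_ifs with h1 h2 h2 <;> simp_all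
  | succ n ih =>
    have key : ((LX 2 1 1 + 1) ^ m1 * (LX 2 0 1 + LX 2 1 1 + 1) ^ (n+1) : R2)
        = (LX 2 1 1 + 1) ^ m1 * (LX 2 0 1 + LX 2 1 1 + 1) ^ n * LX 2 0 1
          + (LX 2 1 1 + 1) ^ (m1+1) * (LX 2 0 1 + LX 2 1 1 + 1) ^ n := by
      rw [pow_succ, pow_succ]; ring
    rw [key, AddMonoidAlgebra.coeff_add, Finsupp.add_apply, coeff_mul_LX, ih, ih]
    have e0 : ((d - Finsupp.single (0:Fin 2) (1:ℤ)) : Fin 2 →₀ ℤ) 1 = d 1 := by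
      rw [Finsupp.sub_apply, sapp01, sub_zero]
    have e1 : ((d - Finsupp.single (0:Fin 2) (1:ℤ)) : Fin 2 →₀ ℤ) 0 = d 0 - 1 := by
      rw [Finsupp.sub_apply, Finsupp.single_eq_same]
    rw [e0, e1]
    have h1 : (m1:ℤ) + n - (d 0 - 1) = (m1+1) + n - d 0 := by push_cast; ring
    have h2 : ((m1:ℤ)+1) + n - d 0 = m1 + (n+1) - d 0 := by ring
    rw [h1]
    push_cast [C2_pascal (n : ℤ) (d 0) (by positivity), h2]
    ring

lemma coeff_core4 (m2 m1 : ℕ) (d : Fin 2 →₀ ℤ) :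
    ((LX 2 0 1 + 1) ^ m1 * (LX 2 0 1 + LX 2 1 1 + 1) ^ m2).coeff d
      = C2 m2 (d 1) * C2 (m1 + m2 - d 1) (d 0) := by
  induction m2 generalizing m1 d with
  | zero =>
    rw [pow_zero, mul_one, coeff_A1]
    have : ((0:ℕ):ℤ) = 0 := rfl
    rw [this, C2_zero]
    split_ifs with h1 h2 h2 <;> simp_all
  | succ n ih =>
    have key : ((LX 2 0 1 + 1) ^ m1 * (LX 2 0 1 + LX 2 1 1 + 1) ^ (n+1) : R2)
        = (LX 2 0 1 + 1) ^ m1 * (LX 2 0 1 + LX 2 1 1 + 1) ^ n * LX 2 1 1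
          + (LX 2 0 1 + 1) ^ (m1+1) * (LX 2 0 1 + LX 2 1 1 + 1) ^ n := by
      rw [pow_succ, pow_succ]; ring
    rw [key, AddMonoidAlgebra.coeff_add, Finsupp.add_apply, coeff_mul_LX, ih, ih]
    have e0 : ((d - Finsupp.single (1:Fin 2) (1:ℤ)) : Fin 2 →₀ ℤ) 0 = d 0 := by
      rw [Finsupp.sub_apply, sapp10, sub_zero]
    have e1 : ((d - Finsupp.single (1:Fin 2) (1:ℤ)) : Fin 2 →₀ ℤ) 1 = d 1 - 1 := by
      rw [Finsupp.sub_apply, Finsupp.single_eq_same]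
    rw [e0, e1]
    have h1 : (m1:ℤ) + n - (d 1 - 1) = (m1+1) + n - d 1 := by push_cast; ring
    have h2 : ((m1:ℤ)+1) + n - d 1 = m1 + (n+1) - d 1 := by ring
    rw [h1]
    push_cast [C2_pascal (n : ℤ) (d 1) (by positivity), h2]
    ring

lemma master (f : R2) (F : ℤ → ℤ → ℤ)
    (hF : ∀ d : Fin 2 →₀ ℤ, f.coeff d = F (d 0) (d 1))
    (h0 : ∀ a b, 0 ≤ F a b)
    (hx : ∀ a b, F (a-1) b * F (a+1) b ≤ F a b ^ 2)
    (hy : ∀ a b, F a (b-1) * F a (b+1) ≤ F a b ^ 2) : IsLogConcave f := by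
  constructor
  · intro d; rw [hF]; exact h0 _ _
  · intro j d
    obtain rfl | rfl : j = 0 ∨ j = 1 := by omega
    · rw [hF, hF, hF]
      have e1 : ((d - Finsupp.single (0:Fin 2) (1:ℤ)) : Fin 2 →₀ ℤ) 0 = d 0 - 1 := by
        rw [Finsupp.sub_apply, Finsupp.single_eq_same]
      have e2 : ((d - Finsupp.single (0:Fin 2) (1:ℤ)) : Fin 2 →₀ ℤ) 1 = d 1 := by
        rw [Finsupp.sub_apply, sapp01, sub_zero]
      have e3 : ((d + Finsupp.single (0:Fin 2) (1:ℤ)) : Fin 2 →₀ ℤ) 0 = d 0 + 1 := by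
        rw [Finsupp.add_apply, Finsupp.single_eq_same]
      have e4 : ((d + Finsupp.single (0:Fin 2) (1:ℤ)) : Fin 2 →₀ ℤ) 1 = d 1 := by
        rw [Finsupp.add_apply, sapp01, add_zero]
      rw [e1, e2, e3, e4]; exact hx _ _
    · rw [hF, hF, hF]
      have e1 : ((d - Finsupp.single (1:Fin 2) (1:ℤ)) : Fin 2 →₀ ℤ) 1 = d 1 - 1 := by
        rw [Finsupp.sub_apply, Finsupp.single_eq_same]
      have e2 : ((d - Finsupp.single (1:Fin 2) (1:ℤ)) : Fin 2 →₀ ℤ) 0 = d 0 := by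
        rw [Finsupp.sub_apply, sapp10, sub_zero]
      have e3 : ((d + Finsupp.single (1:Fin 2) (1:ℤ)) : Fin 2 →₀ ℤ) 1 = d 1 + 1 := by
        rw [Finsupp.add_apply, Finsupp.single_eq_same]
      have e4 : ((d + Finsupp.single (1:Fin 2) (1:ℤ)) : Fin 2 →₀ ℤ) 0 = d 0 := by
        rw [Finsupp.add_apply, sapp10, add_zero]
      rw [e1, e2, e3, e4]; exact hy _ _

lemma prod_ineq {p1 p2 q1 q2 P Q : ℤ} (hq1 : 0 ≤ q1) (hq2 : 0 ≤ q2) (hP : 0 ≤ P)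
    (h1 : p1 * p2 ≤ P ^ 2) (h2 : q1 * q2 ≤ Q ^ 2) :
    p1 * q1 * (p2 * q2) ≤ (P * Q) ^ 2 := by
  have := mul_le_mul h1 h2 (mul_nonneg hq1 hq2) (by positivity)
  nlinarith [this]

lemma fam1 (m1 m2 : ℕ) : IsLogConcave ((LX 2 0 1) ^ m1 * (LX 2 1 1) ^ m2) := by
  have hf : (LX 2 0 1) ^ m1 * (LX 2 1 1) ^ m2
      = Lmon 2 (Finsupp.single 0 (m1:ℤ) + Finsupp.single 1 (m2:ℤ)) := by
    rw [LX_pow, LX_pow, Lmon_mul]; norm_num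
  apply master _ (fun a b => if a = (m1:ℤ) ∧ b = (m2:ℤ) then 1 else 0)
  · intro d
    rw [hf, coeff_Lmon]
    simp [Finsupp.add_apply, Finsupp.single_eq_same]
  · intro a b; split_ifs <;> norm_num
  · intro a b; split_ifs <;> norm_num <;> omega
  · intro a b; split_ifs <;> norm_num <;> omega

lemma fam2 (m1 m2 : ℕ) : IsLogConcave (((LX 2 1 1 + 1) * LX 2 0 (-1)) ^ m1 * (LX 2 1 1) ^ m2) := by
  have hf : ((LX 2 1 1 + 1) * LX 2 0 (-1)) ^ m1 * (LX 2 1 1) ^ m2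
      = (LX 2 1 1 + 1) ^ m1 * Lmon 2 (Finsupp.single 0 (-(m1:ℤ)) + Finsupp.single 1 (m2:ℤ)) := by
    rw [mul_pow, LX_pow, LX_pow, mul_assoc, Lmon_mul]; norm_num
  apply master _ (fun a b => if a + (m1:ℤ) = 0 then C2 m1 (b - m2) else 0)
  · intro d
    rw [hf, coeff_mul_Lmon, coeff_B1]
    have e0 : ((d - (Finsupp.single 0 (-(m1:ℤ)) + Finsupp.single 1 (m2:ℤ))) : Fin 2 →₀ ℤ) 0
        = d 0 + m1 := by
      simp [Finsupp.sub_apply, Finsupp.add_apply, Finsupp.single_eq_same]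
    have e1 : ((d - (Finsupp.single 0 (-(m1:ℤ)) + Finsupp.single 1 (m2:ℤ))) : Fin 2 →₀ ℤ) 1
        = d 1 - m2 := by
      simp [Finsupp.sub_apply, Finsupp.add_apply, Finsupp.single_eq_same]
    rw [e0, e1]
  · intro a b; split_ifs <;> simp [C2_nonneg]
  · intro a b; split_ifs <;> (try omega) <;> simp <;> positivity
  · intro a b
    split_ifs with h
    · have e1 : b - 1 - (m2:ℤ) = (b - m2) - 1 := by ring
      have e2 : b + 1 - (m2:ℤ) = (b - m2) + 1 := by ring
      rw [e1, e2]; exact C2_row _ _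
    · norm_num

lemma fam5 (m1 m2 : ℕ) : IsLogConcave (((LX 2 0 1 + 1) * LX 2 1 (-1)) ^ m1 * (LX 2 0 1) ^ m2) := by
  have hf : ((LX 2 0 1 + 1) * LX 2 1 (-1)) ^ m1 * (LX 2 0 1) ^ m2
      = (LX 2 0 1 + 1) ^ m1 * Lmon 2 (Finsupp.single 1 (-(m1:ℤ)) + Finsupp.single 0 (m2:ℤ)) := by
    rw [mul_pow, LX_pow, LX_pow, mul_assoc, Lmon_mul]; norm_num
  apply master _ (fun a b => if b + (m1:ℤ) = 0 then C2 m1 (a - m2) else 0)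
  · intro d
    rw [hf, coeff_mul_Lmon, coeff_A1]
    have e0 : ((d - (Finsupp.single 1 (-(m1:ℤ)) + Finsupp.single 0 (m2:ℤ))) : Fin 2 →₀ ℤ) 1
        = d 1 + m1 := by
      simp [Finsupp.sub_apply, Finsupp.add_apply, Finsupp.single_eq_same]
    have e1 : ((d - (Finsupp.single 1 (-(m1:ℤ)) + Finsupp.single 0 (m2:ℤ))) : Fin 2 →₀ ℤ) 0
        = d 0 - m2 := by
      simp [Finsupp.sub_apply, Finsupp.add_apply, Finsupp.single_eq_same]
    rw [e0, e1]
  · intro a b; split_ifs <;> simp [C2_nonneg]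
  · intro a b
    split_ifs with h
    · have e1 : a - 1 - (m2:ℤ) = (a - m2) - 1 := by ring
      have e2 : a + 1 - (m2:ℤ) = (a - m2) + 1 := by ring
      rw [e1, e2]; exact C2_row _ _
    · norm_num
  · intro a b; split_ifs <;> (try omega) <;> simp <;> positivity

lemma fam3 (m1 m2 : ℕ) : IsLogConcave (((LX 2 1 1 + 1) * LX 2 0 (-1)) ^ m1 *
      ((LX 2 0 1 + LX 2 1 1 + 1) * (LX 2 0 (-1) * LX 2 1 (-1))) ^ m2) := by
  have hf : ((LX 2 1 1 + 1) * LX 2 0 (-1)) ^ m1 *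
        ((LX 2 0 1 + LX 2 1 1 + 1) * (LX 2 0 (-1) * LX 2 1 (-1))) ^ m2
      = (LX 2 1 1 + 1) ^ m1 * (LX 2 0 1 + LX 2 1 1 + 1) ^ m2 *
        Lmon 2 (Finsupp.single 0 (-(m1:ℤ) + -(m2:ℤ)) + Finsupp.single 1 (-(m2:ℤ))) := by
    have h1 : ((LX 2 1 1 + 1) * LX 2 0 (-1)) ^ m1 *
          ((LX 2 0 1 + LX 2 1 1 + 1) * (LX 2 0 (-1) * LX 2 1 (-1))) ^ m2
        = (LX 2 1 1 + 1) ^ m1 * (LX 2 0 1 + LX 2 1 1 + 1) ^ m2 *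
          ((LX 2 0 (-1)) ^ m1 * ((LX 2 0 (-1)) ^ m2 * (LX 2 1 (-1)) ^ m2)) := by
      rw [mul_pow, mul_pow, mul_pow]; ring
    rw [h1, LX_pow, LX_pow, LX_pow, Lmon_mul, Lmon_mul]
    congr 1
    congr 1
    apply fin2_ext <;> simp [Finsupp.add_apply, Finsupp.single_eq_same] <;> ring
  apply master _ (fun a b => C2 m2 (a + m1 + m2) * C2 (-a) (b + m2))
  · intro d
    rw [hf, coeff_mul_Lmon, coeff_core3]
    have e0 : ((d - (Finsupp.single 0 (-(m1:ℤ) + -(m2:ℤ)) + Finsupp.single 1 (-(m2:ℤ)))) :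
        Fin 2 →₀ ℤ) 0 = d 0 + m1 + m2 := by
      simp [Finsupp.sub_apply, Finsupp.add_apply, Finsupp.single_eq_same]; ring
    have e1 : ((d - (Finsupp.single 0 (-(m1:ℤ) + -(m2:ℤ)) + Finsupp.single 1 (-(m2:ℤ)))) :
        Fin 2 →₀ ℤ) 1 = d 1 + m2 := by
      simp [Finsupp.sub_apply, Finsupp.add_apply, Finsupp.single_eq_same]
    rw [e0, e1]
    have e2 : (m1:ℤ) + m2 - (d 0 + m1 + m2) = -(d 0) := by ring
    rw [e2]
  · intro a b; exact mul_nonneg (C2_nonneg _ _) (C2_nonneg _ _)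
  · intro a b
    have r1 : a - 1 + (m1:ℤ) + m2 = (a + m1 + m2) - 1 := by ring
    have r2 : a + 1 + (m1:ℤ) + m2 = (a + m1 + m2) + 1 := by ring
    have r3 : -(a - 1) = -a + 1 := by ring
    have r4 : -(a + 1) = -a - 1 := by ring
    rw [r1, r2, r3, r4]
    exact prod_ineq (C2_nonneg _ _) (C2_nonneg _ _) (C2_nonneg _ _)
      (C2_row _ _) (by rw [mul_comm]; exact C2_col _ _)
  · intro a b
    have r1 : b - 1 + (m2:ℤ) = (b + m2) - 1 := by ring
    have r2 : b + 1 + (m2:ℤ) = (b + m2) + 1 := by ring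
    rw [r1, r2]
    exact prod_ineq (C2_nonneg _ _) (C2_nonneg _ _) (C2_nonneg _ _)
      (le_of_eq (sq (C2 m2 (a + m1 + m2))).symm) (C2_row _ _)

lemma fam4 (m1 m2 : ℕ) : IsLogConcave (((LX 2 0 1 + 1) * LX 2 1 (-1)) ^ m1 *
      ((LX 2 0 1 + LX 2 1 1 + 1) * (LX 2 0 (-1) * LX 2 1 (-1))) ^ m2) := by
  have hf : ((LX 2 0 1 + 1) * LX 2 1 (-1)) ^ m1 *
        ((LX 2 0 1 + LX 2 1 1 + 1) * (LX 2 0 (-1) * LX 2 1 (-1))) ^ m2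
      = (LX 2 0 1 + 1) ^ m1 * (LX 2 0 1 + LX 2 1 1 + 1) ^ m2 *
        Lmon 2 (Finsupp.single 1 (-(m1:ℤ) + -(m2:ℤ)) + Finsupp.single 0 (-(m2:ℤ))) := by
    have h1 : ((LX 2 0 1 + 1) * LX 2 1 (-1)) ^ m1 *
          ((LX 2 0 1 + LX 2 1 1 + 1) * (LX 2 0 (-1) * LX 2 1 (-1))) ^ m2
        = (LX 2 0 1 + 1) ^ m1 * (LX 2 0 1 + LX 2 1 1 + 1) ^ m2 *
          ((LX 2 1 (-1)) ^ m1 * ((LX 2 1 (-1)) ^ m2 * (LX 2 0 (-1)) ^ m2)) := by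
      rw [mul_pow, mul_pow, mul_pow]; ring
    rw [h1, LX_pow, LX_pow, LX_pow, Lmon_mul, Lmon_mul]
    congr 1
    congr 1
    apply fin2_ext <;> simp [Finsupp.add_apply, Finsupp.single_eq_same] <;> ring
  apply master _ (fun a b => C2 m2 (b + m1 + m2) * C2 (-b) (a + m2))
  · intro d
    rw [hf, coeff_mul_Lmon, coeff_core4]
    have e0 : ((d - (Finsupp.single 1 (-(m1:ℤ) + -(m2:ℤ)) + Finsupp.single 0 (-(m2:ℤ)))) :
        Fin 2 →₀ ℤ) 1 = d 1 + m1 + m2 := by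
      simp [Finsupp.sub_apply, Finsupp.add_apply, Finsupp.single_eq_same]; ring
    have e1 : ((d - (Finsupp.single 1 (-(m1:ℤ) + -(m2:ℤ)) + Finsupp.single 0 (-(m2:ℤ)))) :
        Fin 2 →₀ ℤ) 0 = d 0 + m2 := by
      simp [Finsupp.sub_apply, Finsupp.add_apply, Finsupp.single_eq_same]
    rw [e0, e1]
    have e2 : (m1:ℤ) + m2 - (d 1 + m1 + m2) = -(d 1) := by ring
    rw [e2]
  · intro a b; exact mul_nonneg (C2_nonneg _ _) (C2_nonneg _ _)
  · intro a b
    have r1 : a - 1 + (m2:ℤ) = (a + m2) - 1 := by ring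
    have r2 : a + 1 + (m2:ℤ) = (a + m2) + 1 := by ring
    rw [r1, r2]
    exact prod_ineq (C2_nonneg _ _) (C2_nonneg _ _) (C2_nonneg _ _)
      (le_of_eq (sq (C2 m2 (b + m1 + m2))).symm) (C2_row _ _)
  · intro a b
    have r1 : b - 1 + (m1:ℤ) + m2 = (b + m1 + m2) - 1 := by ring
    have r2 : b + 1 + (m1:ℤ) + m2 = (b + m1 + m2) + 1 := by ring
    have r3 : -(b - 1) = -b + 1 := by ring
    have r4 : -(b + 1) = -b - 1 := by ring
    rw [r1, r2, r3, r4]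
    exact prod_ineq (C2_nonneg _ _) (C2_nonneg _ _) (C2_nonneg _ _)
      (C2_row _ _) (by rw [mul_comm]; exact C2_col _ _)


/-- All cluster monomials of the coefficient-free cluster algebra of type `A₂` are
log-concave: explicitly, each of the five families of Laurent polynomials is
log-concave. -/
theorem logConcave_A2_cluster_monomials (m1 m2 : ℕ) :
    IsLogConcave ((LX 2 0 1) ^ m1 * (LX 2 1 1) ^ m2) ∧
    IsLogConcave (((LX 2 1 1 + 1) * LX 2 0 (-1)) ^ m1 * (LX 2 1 1) ^ m2) ∧
    IsLogConcave (((LX 2 1 1 + 1) * LX 2 0 (-1)) ^ m1 *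
      ((LX 2 0 1 + LX 2 1 1 + 1) * (LX 2 0 (-1) * LX 2 1 (-1))) ^ m2) ∧
    IsLogConcave (((LX 2 0 1 + 1) * LX 2 1 (-1)) ^ m1 *
      ((LX 2 0 1 + LX 2 1 1 + 1) * (LX 2 0 (-1) * LX 2 1 (-1))) ^ m2) ∧
    IsLogConcave (((LX 2 0 1 + 1) * LX 2 1 (-1)) ^ m1 * (LX 2 0 1) ^ m2) :=
  ⟨fam1 m1 m2, fam2 m1 m2, fam3 m1 m2, fam4 m1 m2, fam5 m1 m2⟩
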